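/- For all integers n ≥ 3, the sequence r satisfies the third-order recurrence r_n = 3·r_{n-1} + r_{n-2} - r_{n-3}. -/
import Mathlib


theorem stmt_8 (r a c d : ℕ → ℕ)
    (hr : ∀ n : ℕ, 2 ≤ n → r n = r (n - 1) + a n + c n + d n)
    (ha : ∀ n : ℕ, 2 ≤ n → a n = c (n - 1))
    (hc : ∀ n : ℕ, 2 ≤ n → c n = r (n - 1) + a (n - 1) + d n)
    (hd : ∀ n : ℕ, 2 ≤ n → d n = r (n - 2))
    (ha0 : a 0 = 0) (hc0 : c 0 = 0) (hd0 : d 0 = 0)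
    (ha1 : a 1 = 0) (hd1 : d 1 = 0)
    (hr0 : r 0 = 1) (hr1 : r 1 = 2) (hc1 : c 1 = 1) :
    ∀ n : ℕ, 3 ≤ n → (r n : ℤ) = 3 * r (n - 1) + r (n - 2) - r (n - 3) := by
  intro n hn
  obtain ⟨m, rfl⟩ := Nat.exists_eq_add_of_le hn
  have e1 := hr (3 + m) (by omega)
  have e2 := hr (2 + m) (by omega)
  have e3 := hc (3 + m) (by omega)
  have e4 := ha (3 + m) (by omega)
  have e5 := ha (2 + m) (by omega)
  have e6 := hd (3 + m) (by omega)
  have e7 := hd (2 + m) (by omega)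
  simp only [show 3 + m - 1 = 2 + m from by omega, show 3 + m - 2 = 1 + m from by omega,
    show 3 + m - 3 = m from by omega, show 2 + m - 1 = 1 + m from by omega,
    show 2 + m - 2 = m from by omega] at e1 e2 e3 e4 e5 e6 e7 ⊢
  rw [e4] at e1
  rw [e5] at e2 e3
  rw [e6] at e1 e3
  rw [e7] at e2
  omega
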